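/- (Extended mean value theorem for α-differentiable functions) Let 0 < a < b, β > 0, α ∈ (0,1), and let f, g : [a,b] → ℝ be continuous on [a,b] and α-differentiable on (a,b) in the sense of the local M-derivative, with g(b) ≠ g(a) and 𝒟_M^{α,β} g nonvanishing on (a,b). Then there exists c ∈ (a,b) such that 𝒟_M^{α,β} f(c) / 𝒟_M^{α,β} g(c) = (f(b) − f(a)) / (g(b) − g(a)). -/

import Mathlib

open Filter Topology

/-- One-parameter Mittag-Leffler function `E_β(x) = ∑_{k=0}^∞ x^k / Γ(βk+1)`. -/
noncomputable def mittagLeffler (β x : ℝ) : ℝ :=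
  ∑' k : ℕ, x ^ k / Real.Gamma (β * k + 1)

/-- `f` has local M-derivative `L` of order `α` with parameter `β` at `t`, i.e.
`lim_{ε→0} (f (t · E_β (ε t^{-α})) - f t)/ε = L`. -/
def HasLocalMDerivAt (α β : ℝ) (f : ℝ → ℝ) (t L : ℝ) : Prop :=
  Tendsto (fun ε : ℝ => (f (t * mittagLeffler β (ε * t ^ (-α))) - f t) / ε)
    (𝓝[≠] (0 : ℝ)) (𝓝 L)

lemma gamma_lb : ∃ c > 0, ∀ y : ℝ, 1 ≤ y → c ≤ Real.Gamma y := by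
  have hcont : ContinuousOn Real.Gamma (Set.Icc (1:ℝ) 2) := by
    intro x hx
    refine (Real.differentiableAt_Gamma (fun m => ?_)).continuousAt.continuousWithinAt
    have h1 := hx.1
    have : (0:ℝ) ≤ m := Nat.cast_nonneg m
    intro h; rw [h] at h1; linarith
  obtain ⟨m, hm, hmin⟩ := (isCompact_Icc (a := (1:ℝ)) (b := 2)).exists_isMinOn
    (Set.nonempty_Icc.2 one_le_two) hcont
  refine ⟨min (Real.Gamma m) 1, lt_min (Real.Gamma_pos_of_pos (by linarith [hm.1])) one_pos, ?_⟩
  intro y hy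
  rcases le_or_gt y 2 with h | h
  · exact le_trans (min_le_left _ _) (hmin ⟨hy, h⟩)
  · refine le_trans (min_le_right _ _) ?_
    have := (Real.Gamma_strictMonoOn_Ici.monotoneOn) (Set.mem_Ici.2 le_rfl)
      (Set.mem_Ici.2 h.le) h.le
    rwa [Real.Gamma_two] at this


lemma ml_tendsto {β : ℝ} (hβ : 0 < β) : Filter.Tendsto (mittagLeffler β) (𝓝 0) (𝓝 1) := by
  obtain ⟨c, hc, hγ⟩ := gamma_lb
  have hγ' : ∀ k : ℕ, c ≤ Real.Gamma (β * k + 1) := by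
    intro k; exact hγ _ (by nlinarith [Nat.cast_nonneg (α := ℝ) k])
  have hγpos : ∀ k : ℕ, 0 < Real.Gamma (β * k + 1) := fun k => lt_of_lt_of_le hc (hγ' k)
  have key : ∀ x : ℝ, |x| ≤ 1/2 → |mittagLeffler β x - 1| ≤ (4/c) * |x| := by
    intro x hx
    have hbound : ∀ k : ℕ, ‖x ^ k / Real.Gamma (β * k + 1)‖ ≤ (1/2)^k / c := by
      intro k
      rw [norm_div, norm_pow, Real.norm_eq_abs, Real.norm_eq_abs,
        abs_of_pos (hγpos k)]
      exact div_le_div₀ (by positivity) (pow_le_pow_left₀ (abs_nonneg x) hx k)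
        hc (hγ' k)
    have hgsum : Summable (fun k : ℕ => (1/2:ℝ)^k / c) :=
      (summable_geometric_of_lt_one (by norm_num) (by norm_num)).div_const c
    have hsum : Summable (fun k : ℕ => x ^ k / Real.Gamma (β * k + 1)) :=
      Summable.of_norm (hgsum.of_nonneg_of_le (fun k => norm_nonneg _) hbound)
    have h0 : mittagLeffler β x = 1 + ∑' k : ℕ, x ^ (k+1) / Real.Gamma (β * (k+1:ℕ) + 1) := by
      rw [mittagLeffler, hsum.tsum_eq_zero_add]
      norm_num [Real.Gamma_one]
    rw [h0]
    have htail : |∑' k : ℕ, x ^ (k+1) / Real.Gamma (β * (k+1:ℕ) + 1)|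
        ≤ ∑' k : ℕ, (1/2:ℝ)^(k+1) / c * (2 * |x|) := by
      have hsum' : Summable (fun k : ℕ => x ^ (k+1) / Real.Gamma (β * (k+1:ℕ) + 1)) :=
        (summable_nat_add_iff 1).2 hsum
      refine le_trans (norm_tsum_le_tsum_norm hsum'.norm) ?_
      refine Summable.tsum_le_tsum (fun k => ?_) hsum'.norm
        ((((summable_nat_add_iff 1).2 hgsum).mul_right _))
      have h1 : ‖x ^ (k+1) / Real.Gamma (β * (k+1:ℕ) + 1)‖ ≤ |x|^(k+1) / c := by
        rw [norm_div, norm_pow, Real.norm_eq_abs, Real.norm_eq_abs,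
          abs_of_pos (hγpos (k+1))]
        exact div_le_div₀ (by positivity) le_rfl hc (hγ' (k+1))
      refine h1.trans ?_
      have he : (1/2:ℝ)^(k+1)/c*(2*|x|) = (1/2)^k * |x| / c := by ring
      rw [he, pow_succ]
      gcongr
    have hts : (∑' k : ℕ, (1/2:ℝ)^(k+1) / c * (2 * |x|)) = (2/c) * |x| := by
      rw [tsum_mul_right]
      have : (∑' k : ℕ, (1/2:ℝ)^(k+1) / c) = 1/c := by
        rw [tsum_div_const]
        have : (∑' k : ℕ, (1/2:ℝ)^(k+1)) = 1 := by
          have hg : (∑' k : ℕ, (1/2:ℝ)^k) = 2 := by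
            rw [tsum_geometric_of_lt_one (by norm_num) (by norm_num)]; norm_num
          calc (∑' k : ℕ, (1/2:ℝ)^(k+1)) = ∑' k : ℕ, (1/2:ℝ) * (1/2)^k := by
                congr 1; ext k; ring
            _ = (1/2) * ∑' k : ℕ, (1/2:ℝ)^k := tsum_mul_left
            _ = 1 := by rw [hg]; norm_num
        rw [this]
      rw [this]; ring
    rw [hts] at htail
    calc |1 + (∑' k : ℕ, x ^ (k+1) / Real.Gamma (β * (k+1:ℕ) + 1)) - 1|
        = |∑' k : ℕ, x ^ (k+1) / Real.Gamma (β * (k+1:ℕ) + 1)| := by congr 1; ring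
      _ ≤ (2/c) * |x| := htail
      _ ≤ (4/c) * |x| := by
          have : (0:ℝ) ≤ |x| := abs_nonneg x
          have h2 : (2:ℝ)/c ≤ 4/c := by
            rw [div_eq_mul_inv, div_eq_mul_inv]
            nlinarith [inv_nonneg.2 hc.le]
          nlinarith
  have h0 : Filter.Tendsto (fun x : ℝ => mittagLeffler β x - 1) (𝓝 0) (𝓝 0) := by
    have hev : ∀ᶠ x : ℝ in 𝓝 0, ‖mittagLeffler β x - 1‖ ≤ (4/c) * |x| := by
      filter_upwards [Metric.ball_mem_nhds (0:ℝ) one_half_pos] with x hx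
      rw [Metric.mem_ball, Real.dist_eq, sub_zero] at hx
      simpa [Real.norm_eq_abs] using key x hx.le
    have hg : Filter.Tendsto (fun x : ℝ => (4/c) * |x|) (𝓝 0) (𝓝 0) := by
      exact ((continuous_const (y := (4/c))).mul continuous_abs).tendsto' (0:ℝ) 0 (by simp)
    exact squeeze_zero_norm' hev hg
  have := h0.add_const 1
  simpa using this

/-- The map `ε ↦ t · E_β(ε t^{-α})` tends to `t` as `ε → 0`. -/
lemma phi_tendsto {α β t : ℝ} (hβ : 0 < β) :
    Tendsto (fun ε : ℝ => t * mittagLeffler β (ε * t ^ (-α))) (𝓝 0) (𝓝 t) := by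
  have h1 : Tendsto (fun ε : ℝ => ε * t ^ (-α)) (𝓝 0) (𝓝 0) := by
    exact (continuous_id.mul (continuous_const (y := t ^ (-α)))).tendsto' (0:ℝ) 0 (by simp)
  have h2 := (ml_tendsto hβ).comp h1
  have := (tendsto_const_nhds (x := t) (f := 𝓝 (0:ℝ))).mul h2
  simpa using this

lemma neg_mderiv {α β : ℝ} {h : ℝ → ℝ} {c L : ℝ}
    (hd : HasLocalMDerivAt α β h c L) :
    HasLocalMDerivAt α β (fun x => -h x) c (-L) := by
  have := hd.neg
  refine this.congr (fun ε => ?_)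
  ring

/-- Fermat / Rolle for the local M-derivative at an interior max. -/
lemma mderiv_zero_of_max {α β a b c L : ℝ} (hβ : 0 < β) {h : ℝ → ℝ}
    (hc : c ∈ Set.Ioo a b) (hd : HasLocalMDerivAt α β h c L)
    (hmax : ∀ y ∈ Set.Icc a b, h y ≤ h c) : L = 0 := by
  have hφ : Tendsto (fun ε : ℝ => c * mittagLeffler β (ε * c ^ (-α))) (𝓝 0) (𝓝 c) :=
    phi_tendsto hβ
  have hev : ∀ᶠ ε : ℝ in 𝓝 0, c * mittagLeffler β (ε * c ^ (-α)) ∈ Set.Ioo a b :=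
    hφ (isOpen_Ioo.mem_nhds hc)
  have hL1 : L ≤ 0 := by
    have hten : Tendsto (fun ε : ℝ => (h (c * mittagLeffler β (ε * c ^ (-α))) - h c) / ε)
        (𝓝[>] (0:ℝ)) (𝓝 L) :=
      hd.mono_left (nhdsWithin_mono 0 (fun x hx => ne_of_gt hx))
    refine le_of_tendsto hten ?_
    filter_upwards [eventually_nhdsWithin_of_eventually_nhds hev,
      self_mem_nhdsWithin] with ε hφε hε
    exact div_nonpos_of_nonpos_of_nonneg
      (sub_nonpos.2 (hmax _ (Set.Ioo_subset_Icc_self hφε))) (le_of_lt hε)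
  have hL2 : 0 ≤ L := by
    have hten : Tendsto (fun ε : ℝ => (h (c * mittagLeffler β (ε * c ^ (-α))) - h c) / ε)
        (𝓝[<] (0:ℝ)) (𝓝 L) :=
      hd.mono_left (nhdsWithin_mono 0 (fun x hx => ne_of_lt hx))
    refine ge_of_tendsto hten ?_
    filter_upwards [eventually_nhdsWithin_of_eventually_nhds hev,
      self_mem_nhdsWithin] with ε hφε hε
    rw [← neg_div_neg_eq]
    exact div_nonneg (neg_nonneg.2 (sub_nonpos.2 (hmax _ (Set.Ioo_subset_Icc_self hφε))))
      (neg_nonneg.2 (le_of_lt hε))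
  linarith

lemma mderiv_zero_of_min {α β a b c L : ℝ} (hβ : 0 < β) {h : ℝ → ℝ}
    (hc : c ∈ Set.Ioo a b) (hd : HasLocalMDerivAt α β h c L)
    (hmin : ∀ y ∈ Set.Icc a b, h c ≤ h y) : L = 0 := by
  have := mderiv_zero_of_max hβ hc (neg_mderiv hd)
    (fun y hy => neg_le_neg (hmin y hy))
  linarith

/-- Extended mean value theorem for α-differentiable functions. -/
theorem stmt14 (a b α β : ℝ) (ha : 0 < a) (hab : a < b)
    (hα : α ∈ Set.Ioo (0 : ℝ) 1) (hβ : 0 < β)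
    (f g Df Dg : ℝ → ℝ)
    (hfc : ContinuousOn f (Set.Icc a b)) (hgc : ContinuousOn g (Set.Icc a b))
    (hfd : ∀ x ∈ Set.Ioo a b, HasLocalMDerivAt α β f x (Df x))
    (hgd : ∀ x ∈ Set.Ioo a b, HasLocalMDerivAt α β g x (Dg x))
    (hgab : g b ≠ g a) (hDg : ∀ x ∈ Set.Ioo a b, Dg x ≠ 0) :
    ∃ c ∈ Set.Ioo a b, Df c / Dg c = (f b - f a) / (g b - g a) := by
  set F : ℝ → ℝ := fun x => (f b - f a) * g x - (g b - g a) * f x with hF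
  set DF : ℝ → ℝ := fun x => (f b - f a) * Dg x - (g b - g a) * Df x with hDF
  have hFd : ∀ x ∈ Set.Ioo a b, HasLocalMDerivAt α β F x (DF x) := by
    intro x hx
    have := ((tendsto_const_nhds (x := f b - f a)
        (f := 𝓝[≠] (0:ℝ))).mul (hgd x hx)).sub
      ((tendsto_const_nhds (x := g b - g a) (f := 𝓝[≠] (0:ℝ))).mul (hfd x hx))
    refine this.congr (fun ε => ?_)
    simp only [hF]
    ring
  have hFc : ContinuousOn F (Set.Icc a b) :=
    (continuousOn_const.mul hgc).sub (continuousOn_const.mul hfc)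
  have hFab : F a = F b := by simp only [hF]; ring
  have hne : (Set.Icc a b).Nonempty := Set.nonempty_Icc.2 hab.le
  obtain ⟨xM, hxM, hxMmax⟩ := isCompact_Icc.exists_isMaxOn hne hFc
  obtain ⟨xm, hxm, hxmmin⟩ := isCompact_Icc.exists_isMinOn hne hFc
  have key : ∃ c ∈ Set.Ioo a b, DF c = 0 := by
    rcases eq_or_ne (F xM) (F a) with hM | hM
    · rcases eq_or_ne (F xm) (F a) with hm | hm
      · -- F is constant on Icc a b
        have hconst : ∀ y ∈ Set.Icc a b, F y = F a := by
          intro y hy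
          have h1 : F y ≤ F xM := hxMmax hy
          have h2 : F xm ≤ F y := hxmmin hy
          rw [hM] at h1; rw [hm] at h2
          linarith
        set c := (a + b) / 2 with hcdef
        have hc : c ∈ Set.Ioo a b := ⟨by linarith, by linarith⟩
        refine ⟨c, hc, ?_⟩
        have hφ : Tendsto (fun ε : ℝ => c * mittagLeffler β (ε * c ^ (-α))) (𝓝 0) (𝓝 c) :=
          phi_tendsto hβ
        have hev : ∀ᶠ ε : ℝ in 𝓝 0, c * mittagLeffler β (ε * c ^ (-α)) ∈ Set.Ioo a b :=
          hφ (isOpen_Ioo.mem_nhds hc)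
        have hev0 : ∀ᶠ ε : ℝ in 𝓝[≠] (0:ℝ),
            (F (c * mittagLeffler β (ε * c ^ (-α))) - F c) / ε = 0 := by
          filter_upwards [eventually_nhdsWithin_of_eventually_nhds hev] with ε hφε
          rw [hconst _ (Set.Ioo_subset_Icc_self hφε), hconst _ (Set.Ioo_subset_Icc_self hc)]
          simp
        have h2 : Tendsto (fun ε : ℝ =>
            (F (c * mittagLeffler β (ε * c ^ (-α))) - F c) / ε) (𝓝[≠] (0:ℝ)) (𝓝 0) :=
          Tendsto.congr' (Filter.EventuallyEq.symm hev0) tendsto_const_nhds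
        exact tendsto_nhds_unique (hFd c hc) h2
      · -- min is interior
        have hxm' : xm ∈ Set.Ioo a b := by
          rcases hxm.1.lt_or_eq with h | h
          · rcases hxm.2.lt_or_eq with h' | h'
            · exact ⟨h, h'⟩
            · exact absurd (h' ▸ hFab ▸ rfl : F xm = F a) hm
          · exact absurd (h ▸ rfl : F xm = F a) hm
        exact ⟨xm, hxm', mderiv_zero_of_min hβ hxm' (hFd xm hxm') (fun y hy => hxmmin hy)⟩
    · -- max is interior
      have hxM' : xM ∈ Set.Ioo a b := by
        rcases hxM.1.lt_or_eq with h | h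
        · rcases hxM.2.lt_or_eq with h' | h'
          · exact ⟨h, h'⟩
          · exact absurd (h' ▸ hFab ▸ rfl : F xM = F a) hM
        · exact absurd (h ▸ rfl : F xM = F a) hM
      exact ⟨xM, hxM', mderiv_zero_of_max hβ hxM' (hFd xM hxM') (fun y hy => hxMmax hy)⟩
  obtain ⟨c, hc, hDF0⟩ := key
  refine ⟨c, hc, ?_⟩
  rw [div_eq_div_iff (hDg c hc) (sub_ne_zero.2 hgab)]
  simp only [hDF] at hDF0
  linarith
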